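/- arXiv:1911.08468 — 2 statements merged into one kernel-verified Lean document; each statement's English description precedes it below -/
import Mathlib

section
/- Let (X, d) be a metric space, let E be a real inner product space, and let e : X → E satisfy ‖e(x) − e(x')‖ = d(x, x') for all x, x' ∈ X. Fix points X₁, …, Xₙ ∈ X and define the empirically centered kernel K(x, x') = (1/(2n²)) ∑ᵢ₌₁ⁿ ∑ⱼ₌₁ⁿ ( d(x, Xᵢ)² + d(x', Xⱼ)² − d(x, x')² − d(Xᵢ, Xⱼ)² ). Then with ē = (1/n) ∑ᵢ e(Xᵢ), for all x, x' ∈ X one has K(x, x') = ⟨e(x) − ē, e(x') − ē⟩. -/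
open Finset

theorem empirically_centered_kernel_eq_inner
    {X : Type*} [MetricSpace X]
    {E : Type*} [NormedAddCommGroup E] [InnerProductSpace ℝ E]
    (e : X → E) (he : ∀ x x' : X, ‖e x - e x'‖ = dist x x')
    (n : ℕ) (hn : 1 ≤ n) (P : Fin n → X)
    (ebar : E) (hebar : ebar = (n : ℝ)⁻¹ • ∑ i, e (P i)) :
    ∀ x x' : X,
      (1 / (2 * (n : ℝ) ^ 2)) *
          ∑ i, ∑ j,
            (dist x (P i) ^ 2 + dist x' (P j) ^ 2 - dist x x' ^ 2
              - dist (P i) (P j) ^ 2) =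
        (inner ℝ (e x - ebar) (e x' - ebar) : ℝ) := by
  intro x x'
  have hn0 : (n : ℝ) ≠ 0 := by positivity
  have key : ∀ a b : X, dist a b ^ 2
      = ‖e a‖ ^ 2 - 2 * (inner ℝ (e a) (e b) : ℝ) + ‖e b‖ ^ 2 := by
    intro a b
    rw [← he, @norm_sub_sq_real]
  -- rewrite the RHS
  subst hebar
  have hs1 : (inner ℝ (e x) ((n : ℝ)⁻¹ • ∑ i, e (P i)) : ℝ)
      = (n : ℝ)⁻¹ * ∑ i, (inner ℝ (e x) (e (P i)) : ℝ) := by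
    rw [real_inner_smul_right, inner_sum]
  have hs2 : (inner ℝ ((n : ℝ)⁻¹ • ∑ i, e (P i)) (e x') : ℝ)
      = (n : ℝ)⁻¹ * ∑ i, (inner ℝ (e (P i)) (e x') : ℝ) := by
    rw [real_inner_smul_left, sum_inner]
  have hs3 : (inner ℝ ((n : ℝ)⁻¹ • ∑ i, e (P i)) ((n : ℝ)⁻¹ • ∑ j, e (P j)) : ℝ)
      = (n : ℝ)⁻¹ * ((n : ℝ)⁻¹ * ∑ i, ∑ j, (inner ℝ (e (P i)) (e (P j)) : ℝ)) := by
    rw [real_inner_smul_left, real_inner_smul_right, sum_inner]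
    congr 2
    refine Finset.sum_congr rfl fun i _ => ?_
    rw [inner_sum]
  have hRHS : (inner ℝ (e x - (n : ℝ)⁻¹ • ∑ i, e (P i))
      (e x' - (n : ℝ)⁻¹ • ∑ i, e (P i)) : ℝ)
      = (inner ℝ (e x) (e x') : ℝ)
        - (n : ℝ)⁻¹ * ∑ i, (inner ℝ (e x) (e (P i)) : ℝ)
        - (n : ℝ)⁻¹ * ∑ i, (inner ℝ (e (P i)) (e x') : ℝ)
        + (n : ℝ)⁻¹ * ((n : ℝ)⁻¹ * ∑ i, ∑ j, (inner ℝ (e (P i)) (e (P j)) : ℝ)) := by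
    rw [inner_sub_left, inner_sub_right, inner_sub_right, hs1, hs2, hs3]
    ring
  rw [hRHS]
  -- rewrite the LHS
  have hbody : ∀ i j : Fin n,
      dist x (P i) ^ 2 + dist x' (P j) ^ 2 - dist x x' ^ 2 - dist (P i) (P j) ^ 2
      = 2 * (inner ℝ (e x) (e x') : ℝ)
        - 2 * (inner ℝ (e x) (e (P i)) : ℝ)
        - 2 * (inner ℝ (e (P j)) (e x') : ℝ)
        + 2 * (inner ℝ (e (P i)) (e (P j)) : ℝ) := by
    intro i j
    rw [key, key, key, key, real_inner_comm (e (P j)) (e x')]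
    ring
  have hsum : ∑ i, ∑ j, (dist x (P i) ^ 2 + dist x' (P j) ^ 2 - dist x x' ^ 2
      - dist (P i) (P j) ^ 2)
      = 2 * (n : ℝ) ^ 2 * (inner ℝ (e x) (e x') : ℝ)
        - 2 * (n : ℝ) * ∑ i, (inner ℝ (e x) (e (P i)) : ℝ)
        - 2 * (n : ℝ) * ∑ j, (inner ℝ (e (P j)) (e x') : ℝ)
        + 2 * ∑ i, ∑ j, (inner ℝ (e (P i)) (e (P j)) : ℝ) := by
    rw [Finset.sum_congr rfl fun i _ => Finset.sum_congr rfl fun j _ => hbody i j]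
    simp only [Finset.sum_add_distrib, Finset.sum_sub_distrib, Finset.sum_const,
      Finset.card_univ, Fintype.card_fin, nsmul_eq_mul, ← Finset.mul_sum,
      ← Finset.sum_mul]
    ring
  rw [hsum]
  field_simp
end

section
/- Let (X, d) be a metric space admitting an isometric embedding e : X → E into a real inner product space (i.e., ‖e(x) − e(x')‖ = d(x, x') for all x, x'). Fix X₁, …, Xₙ ∈ X and let K be the empirically centered kernel. Then K is positive semidefinite: for every m, every c₁, …, c_m ∈ ℝ, and every y₁, …, y_m ∈ X, ∑ᵢ₌₁ᵐ ∑ⱼ₌₁ᵐ cᵢ cⱼ K(yᵢ, yⱼ) ≥ 0. -/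
open Finset

lemma vec_polarization {E : Type*} [NormedAddCommGroup E] [InnerProductSpace ℝ E]
    (a b c d : E) :
    2 * (inner ℝ (a - d) (b - c) : ℝ) =
      ‖a - c‖ ^ 2 + ‖b - d‖ ^ 2 - ‖a - b‖ ^ 2 - ‖c - d‖ ^ 2 := by
  have h1 := @norm_sub_sq_real E _ _ a c
  have h2 := @norm_sub_sq_real E _ _ b d
  have h3 := @norm_sub_sq_real E _ _ a b
  have h4 := @norm_sub_sq_real E _ _ c d
  have h5 : (inner ℝ (a - d) (b - c) : ℝ) =
      inner ℝ a b - inner ℝ a c - inner ℝ d b + inner ℝ d c := by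
    simp [inner_sub_left, inner_sub_right]; ring
  have c1 : (inner ℝ a c : ℝ) = inner ℝ c a := real_inner_comm c a
  have c2 : (inner ℝ b d : ℝ) = inner ℝ d b := real_inner_comm d b
  have c3 : (inner ℝ c d : ℝ) = inner ℝ d c := real_inner_comm d c
  rw [h1, h2, h3, h4, h5]
  ring_nf
  linarith [c1, c2, c3]

theorem empirically_centered_kernel_posSemidef
    {X : Type*} [MetricSpace X]
    {E : Type*} [NormedAddCommGroup E] [InnerProductSpace ℝ E]
    (e : X → E) (he : ∀ x x' : X, ‖e x - e x'‖ = dist x x')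
    (n : ℕ) (hn : 1 ≤ n) (P : Fin n → X)
    (K : X → X → ℝ)
    (hK : ∀ x x' : X,
      K x x' =
        (1 / (2 * (n : ℝ) ^ 2)) *
          ∑ i, ∑ j,
            (dist x (P i) ^ 2 + dist x' (P j) ^ 2 - dist x x' ^ 2
              - dist (P i) (P j) ^ 2)) :
    ∀ (m : ℕ) (c : Fin m → ℝ) (y : Fin m → X),
      0 ≤ ∑ i, ∑ j, c i * c j * K (y i) (y j) := by
  have hn' : (0 : ℝ) < (n : ℝ) := by exact_mod_cast hn
  set μ : E := ((n : ℝ))⁻¹ • ∑ i, e (P i) with hμ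
  -- K x x' = ⟪e x - μ, e x' - μ⟫
  have hKinner : ∀ x x' : X, K x x' = (inner ℝ (e x - μ) (e x' - μ) : ℝ) := by
    intro x x'
    rw [hK]
    have hterm : ∀ i j : Fin n,
        dist x (P i) ^ 2 + dist x' (P j) ^ 2 - dist x x' ^ 2
          - dist (P i) (P j) ^ 2
        = 2 * (inner ℝ (e x - e (P j)) (e x' - e (P i)) : ℝ) := by
      intro i j
      rw [vec_polarization (e x) (e x') (e (P i)) (e (P j))]
      simp [he, dist_comm]
    have hsum : (∑ i, ∑ j, (dist x (P i) ^ 2 + dist x' (P j) ^ 2 - dist x x' ^ 2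
          - dist (P i) (P j) ^ 2))
        = 2 * (inner ℝ ((n : ℝ)⁻¹ • ∑ j, (e x - e (P j)))
            ((n : ℝ)⁻¹ • ∑ i, (e x' - e (P i))) : ℝ) * (n : ℝ) ^ 2 := by
      rw [real_inner_smul_left, real_inner_smul_right, sum_inner]
      rw [Finset.sum_congr rfl fun i _ => Finset.sum_congr rfl fun j _ => hterm i j]
      have : ∀ j : Fin n, (inner ℝ (e x - e (P j)) (∑ i, (e x' - e (P i))) : ℝ)
          = ∑ i, (inner ℝ (e x - e (P j)) (e x' - e (P i)) : ℝ) := by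
        intro j; exact inner_sum _ _ _
      rw [Finset.sum_congr rfl fun j _ => this j]
      rw [Finset.sum_comm]
      simp only [← Finset.mul_sum]
      have key : ∀ S : ℝ, 2 * S = 2 * ((n:ℝ)⁻¹ * ((n:ℝ)⁻¹ * S)) * (n:ℝ)^2 := by
        intro S
        have h : ((n:ℝ))⁻¹ * ((n:ℝ))⁻¹ * (n:ℝ)^2 = 1 := by
          field_simp
        linear_combination (-2 * S) * h
      exact key _
    rw [hsum]
    have hcenter : ∀ z : X, (n : ℝ)⁻¹ • ∑ j, (e z - e (P j)) = e z - μ := by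
      intro z
      rw [Finset.sum_sub_distrib, Finset.sum_const, Finset.card_fin, smul_sub, hμ]
      congr 1
      rw [← Nat.cast_smul_eq_nsmul ℝ, smul_smul, inv_mul_cancel₀ (ne_of_gt hn'), one_smul]
    rw [hcenter, hcenter]
    field_simp
  intro m c y
  have : (∑ i, ∑ j, c i * c j * K (y i) (y j))
      = (inner ℝ (∑ i, c i • (e (y i) - μ)) (∑ j, c j • (e (y j) - μ)) : ℝ) := by
    rw [sum_inner]
    refine Finset.sum_congr rfl fun i _ => ?_
    rw [inner_sum]
    refine Finset.sum_congr rfl fun j _ => ?_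
    rw [hKinner, real_inner_smul_left, real_inner_smul_right]
    ring
  rw [this]
  exact real_inner_self_nonneg
end
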